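/- Let d ≥ 1 and c ≥ 1 be integers, let G be a d-path-dominant digraph, let Q be a minimal path of G with exactly cd vertices, and let x_1,…,x_c be distinct vertices of G not belonging to V(Q), each of which is Q-outward. Then there exist vertices y_1,…,y_c of Q, distinct and occurring in that order along Q, such that y_jx_j is an edge of G for 1 ≤ j ≤ c; moreover y_j can be chosen among the ((j−1)d+1)-th through (jd)-th vertices of Q. -/

import Mathlib

open List

/-! Basic digraph/path definitions.  A digraph on `V` is a relation `G : V → V → Prop`
(looplessness is expressed by `Irreflexive G`).  A (directed) path is a nonempty list of
distinct vertices in which consecutive vertices are joined by edges of `G`. -/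

/-- `uv` is an edge of the path `P`, i.e. `u,v` are consecutive on `P`. -/
def PEdge {V : Type} (P : List V) (u v : V) : Prop := [u, v] <:+: P

/-- `P` is a directed path of the digraph `G`. -/
def IsPath {V : Type} (G : V → V → Prop) (P : List V) : Prop :=
  P ≠ [] ∧ P.Nodup ∧ P.Chain' G

/-- `P` is a minimal path of `G`: for every edge `v_i v_j` of `G` between vertices of `P`,
`j ≤ i + 1`. -/
def IsMinimal {V : Type} (G : V → V → Prop) (P : List V) : Prop :=
  ∀ i j : Fin P.length, G (P.get i) (P.get j) → (j : ℕ) ≤ (i : ℕ) + 1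

/-- `G` is `d`-path-dominant. -/
def PathDominant {V : Type} (d : ℕ) (G : V → V → Prop) : Prop :=
  ∀ P : List V, IsPath G P → IsMinimal G P → P.length = d →
    ∀ v : V, v ∈ P ∨ (∃ w ∈ P, G v w) ∨ (∃ w ∈ P, G w v)

/-- A linkage: a tuple of pairwise vertex-disjoint paths. -/
def IsLinkage {V : Type} (G : V → V → Prop) {k : ℕ} (L : Fin k → List V) : Prop :=
  (∀ i, IsPath G (L i)) ∧ ∀ i j : Fin k, i ≠ j → ∀ v, v ∈ L i → v ∉ L j

/-- `v` is `Q`-outward: `v ∉ Q` and no vertex of `Q` is adjacent from `v`. -/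
def Outward {V : Type} (G : V → V → Prop) (Q : List V) (v : V) : Prop :=
  v ∉ Q ∧ ∀ w ∈ Q, ¬ G v w

/-- `v` is `Q`-inward: `v ∉ Q` and no vertex of `Q` is adjacent to `v`. -/
def Inward {V : Type} (G : V → V → Prop) (Q : List V) (v : V) : Prop :=
  v ∉ Q ∧ ∀ w ∈ Q, ¬ G w v

section Inhab
variable {V : Type} [Inhabited V]

/-- A linkage for the problem instance `(G, s₁, t₁, …, s_k, t_k)`. -/
def IsLinkageFor (G : V → V → Prop) {k : ℕ} (s t : Fin k → V) (L : Fin k → List V) : Prop :=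
  IsLinkage G L ∧ ∀ i, (L i).head! = s i ∧ (L i).getLast! = t i

/-- `x` is a quality: there is an `x`-linkage for the instance. -/
def IsQuality (G : V → V → Prop) {k : ℕ} (s t : Fin k → V) (x : Fin k → ℕ) : Prop :=
  ∃ L : Fin k → List V, IsLinkageFor G s t L ∧ ∀ i, (L i).length = x i

/-- `x` is a key quality: a quality not strictly dominating any other quality. -/
def IsKeyQuality (G : V → V → Prop) {k : ℕ} (s t : Fin k → V) (x : Fin k → ℕ) : Prop :=
  IsQuality G s t x ∧ ¬ ∃ y : Fin k → ℕ, IsQuality G s t y ∧ y ≤ x ∧ y ≠ x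

/-- `v` is an internal vertex of the linkage `M`. -/
def Internal {k : ℕ} (M : Fin k → List V) (v : V) : Prop :=
  (∃ i, v ∈ M i) ∧ ∀ i, v ≠ (M i).head! ∧ v ≠ (M i).getLast!

/-- The linkage `M` is internally disjoint from the linkage `L`. -/
def InternallyDisjointFrom {k l : ℕ} (M : Fin k → List V) (L : Fin l → List V) : Prop :=
  ∀ v, Internal M v → ∀ i, v ∉ L i

/-- A planar `(Q,R)`-matching of cardinality `n`. -/
def IsPlanarMatching (G : V → V → Prop) (Q R : List V) {n : ℕ} (M : Fin n → List V) : Prop :=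
  IsLinkage G M ∧ (∀ j, (M j).length = 2 ∨ (M j).length = 3) ∧
  (List.ofFn fun j => (M j).head!).Sublist Q ∧
  (List.ofFn fun j => (M j).getLast!).Sublist R

/-- A planar `(Q,R)`-matching is `s`-spaced. -/
def SSpaced (Q R : List V) {n : ℕ} (M : Fin n → List V) (s : ℕ) : Prop :=
  (∀ W : List V, W <:+: Q → W.length ≤ s →
    ∀ j j' : Fin n, (∃ v ∈ W, v ∈ M j) → (∃ v ∈ W, v ∈ M j') → j = j') ∧
  (∀ W : List V, W <:+: R → W.length ≤ s →
    ∀ j j' : Fin n, (∃ v ∈ W, v ∈ M j) → (∃ v ∈ W, v ∈ M j') → j = j')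

/-- `A(L)`: vertices outside `V(L)` that are `(M_j ∖ t(M_j))`-inward for some `j`
with `t(M_j) ≠ t_j`. -/
def RailA (G : V → V → Prop) {k : ℕ} (t : Fin k → V) (L : Fin k → List V) : Set V :=
  {v | (∀ i, v ∉ L i) ∧ ∃ j, (L j).getLast! ≠ t j ∧ ∀ w ∈ (L j).dropLast, ¬ G w v}

/-- `B(L)`: vertices outside `V(L)` that are `(M_j ∖ s(M_j))`-outward for some `j`
with `s(M_j) ≠ s_j`. -/
def RailB (G : V → V → Prop) {k : ℕ} (s : Fin k → V) (L : Fin k → List V) : Set V :=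
  {v | (∀ i, v ∉ L i) ∧ ∃ j, (L j).head! ≠ s j ∧ ∀ w ∈ (L j).tail, ¬ G v w}

/-- The confusion of the linkage `L`, namely `|A(L) ∩ B(L)|`. -/
noncomputable def Confusion (G : V → V → Prop) {k : ℕ} (s t : Fin k → V)
    (L : Fin k → List V) : ℕ :=
  (RailA G t L ∩ RailB G s L).ncard

/-- `(L, X, Y)` is a `(k,m,c)`-rail in the problem instance. -/
def IsRail (G : V → V → Prop) {k : ℕ} (s t : Fin k → V) (m c : ℕ)
    (L : Fin k → List V) (X Y : Set V) : Prop :=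
  IsLinkage G L ∧
  (∀ j, (L j).length ≤ 2*m ∧
    ((L j).length < 2*m → (L j).head! = s j ∨ (L j).getLast! = t j)) ∧
  Confusion G s t L ≤ c ∧
  Disjoint X Y ∧
  X ⊆ RailA G t L ∧ Y ⊆ RailB G s L ∧ X ∪ Y = RailA G t L ∪ RailB G s L

end Inhab

/-- The data of a potential rail: a `k`-tuple of paths together with two vertex sets. -/
abbrev RailT (V : Type) (k : ℕ) := (Fin k → List V) × Set V × Set V

section Inhab2
variable {V : Type} [Inhabited V]

/-- The edge relation `(L,X,Y) → (L',X',Y')` between distinct rails. -/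
def RailStep (G : V → V → Prop) {k : ℕ} (r r' : RailT V k) : Prop :=
  r ≠ r' ∧
  (∀ i, ∃ W : List V, IsPath G W ∧ W.head! = (r.1 i).head! ∧
    W.getLast! = (r'.1 i).getLast! ∧
    (∀ v, v ∈ W ↔ v ∈ r.1 i ∨ v ∈ r'.1 i) ∧
    (∀ u v, PEdge W u v ↔ PEdge (r.1 i) u v ∨ PEdge (r'.1 i) u v)) ∧
  (∀ i, ∀ v ∈ r'.1 i, v ∈ r.1 i ∨ v ∈ r.2.1) ∧
  (∀ i, ∀ v ∈ r.1 i, v ∈ r'.1 i ∨ v ∈ r'.2.2) ∧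
  r'.2.1 ⊆ r.2.1 ∧ r.2.2 ⊆ r'.2.2

/-- A path from `s₀` to `t₀` in the `(k,m,c)`-tracker, recorded by its list of
intermediate rail vertices. -/
def IsTrackerPath (G : V → V → Prop) {k : ℕ} (s t : Fin k → V) (m c : ℕ)
    (rs : List (RailT V k)) : Prop :=
  rs ≠ [] ∧ rs.Nodup ∧ rs.Chain' (RailStep G) ∧
  (∀ r ∈ rs, IsRail G s t m c r.1 r.2.1 r.2.2) ∧
  (∀ r ∈ rs.head?, ∀ j, (r.1 j).head! = s j) ∧
  (∀ r ∈ rs.getLast?, ∀ j, (r.1 j).getLast! = t j)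

end Inhab2

/-- A tracker path traces the linkage `P`: each `P j` is the union (as a digraph) of the
`j`-th members of the rails of the path. -/
def Traces {V : Type} {k : ℕ} (rs : List (RailT V k)) (P : Fin k → List V) : Prop :=
  ∀ j, (∀ v, v ∈ P j ↔ ∃ r ∈ rs, v ∈ r.1 j) ∧
       (∀ u v, PEdge (P j) u v ↔ ∃ r ∈ rs, PEdge (r.1 j) u v)

section Dec
variable {V : Type} [DecidableEq V]

/-- `V(L)`, the set of vertices of the linkage `L`, as a finset. -/
def LV {k : ℕ} (L : Fin k → List V) : Finset V :=
  Finset.univ.biUnion fun i => (L i).toFinset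

/-- `B` is acceptable for the linkage `L` (with parameters `d, k`). -/
def Acceptable [Inhabited V] (G : V → V → Prop) (d k : ℕ) (L : Fin k → List V)
    (B : Finset V) : Prop :=
  (∀ j : Fin k, ∀ u v : V, PEdge (L j) u v → v ∈ B → u ∈ B) ∧
  ∀ i j : Fin k, ¬ ∃ M : Fin ((k-1)*d + k^2 + 2) → List V,
    IsPlanarMatching G ((L i).filter (· ∈ B)) ((L j).filter (· ∉ B)) M ∧
    InternallyDisjointFrom M L

/-- Labels along a tracker path, after the first rail: consecutive rails `r, r'`
contribute `|V(M'_j) ∖ V(M_j)|` in coordinate `j`. -/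
def labelFrom {k : ℕ} : RailT V k → List (RailT V k) → (Fin k → ℕ)
  | _, [] => fun _ => 0
  | r, r' :: rest => (fun j => ((r'.1 j).toFinset \ (r.1 j).toFinset).card) + labelFrom r' rest

/-- The total label `l(P)` of a tracker path with rail list `rs`: the edge from `s₀`
contributes `|V(M_j)|`, each rail-to-rail edge contributes the difference counts, and the
edge to `t₀` contributes `0`. -/
def pathLabel {k : ℕ} : List (RailT V k) → (Fin k → ℕ)
  | [] => fun _ => 0
  | r :: rest => (fun j => (r.1 j).toFinset.card) + labelFrom r rest

/-- `Q_{p,j}`: the maximal subpath of `P` with at most `m` vertices whose last vertex is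
the last vertex of `P` among `v_1, …, v_p` (null if there is none). -/
def Qseg (m : ℕ) (e : List V) (p : ℕ) (P : List V) : List V :=
  (P.filter (· ∈ e.take p)).drop ((P.filter (· ∈ e.take p)).length - m)

/-- `R_{p,j}`: the maximal subpath of `P` with at most `m` vertices whose first vertex is
the first vertex of `P` among `v_{p+1}, …, v_n` (null if there is none). -/
def Rseg (m : ℕ) (e : List V) (p : ℕ) (P : List V) : List V :=
  (P.filter (· ∈ e.drop p)).take m

/-- `M_{p,j} = Q_{p,j} ∪ R_{p,j}` (together with the connecting edge of `P` when both
are non-null). -/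
def Mseg (m : ℕ) (e : List V) (p : ℕ) (P : List V) : List V :=
  Qseg m e p P ++ Rseg m e p P

end Dec

theorem stmt9 {V : Type} [Fintype V] [DecidableEq V] [Inhabited V]
    (G : V → V → Prop) (hG : Irreflexive G)
    (d c : ℕ) (hd : 1 ≤ d) (hc : 1 ≤ c) (hdom : PathDominant d G)
    (Q : List V) (hQ : IsPath G Q) (hQmin : IsMinimal G Q) (hQlen : Q.length = c * d)
    (x : Fin c → V) (hinj : Function.Injective x)
    (hout : ∀ j, Outward G Q (x j)) :
    ∃ y : Fin c → V, (List.ofFn y).Sublist Q ∧ (∀ j, G (y j) (x j)) ∧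
      ∀ j : Fin c, ∃ i : Fin Q.length, Q.get i = y j ∧
        (j : ℕ) * d ≤ (i : ℕ) ∧ (i : ℕ) < ((j : ℕ) + 1) * d := by
  classical
  -- the segment of Q for index j
  set S : Fin c → List V := fun j => (Q.drop ((j : ℕ) * d)).take d with hS
  have hbound : ∀ j : Fin c, ((j : ℕ) + 1) * d ≤ Q.length := by
    intro j
    rw [hQlen]
    exact Nat.mul_le_mul_right d j.2
  have hexp : ∀ j : Fin c, ((j : ℕ) + 1) * d = (j : ℕ) * d + d := fun j => by ring
  have hSlen : ∀ j, (S j).length = d := by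
    intro j
    simp only [hS, List.length_take, List.length_drop]
    have := hbound j
    have := hexp j
    omega
  have hSget : ∀ (j : Fin c) (p : ℕ) (hp : p < d),
      (S j)[p]'(by rw [hSlen]; exact hp) =
        Q[(j : ℕ) * d + p]'(by have := hbound j; have := hexp j; omega) := by
    intro j p hp
    simp [hS, List.getElem_take, List.getElem_drop]
  have hSsub : ∀ j, S j <+ Q := fun j =>
    (List.take_sublist _ _).trans (List.drop_sublist _ _)
  have hSinf : ∀ j, S j <:+: Q := fun j =>
    ((List.take_prefix _ _).isInfix).trans (List.drop_suffix _ _).isInfix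
  have hSpath : ∀ j, IsPath G (S j) := by
    intro j
    refine ⟨?_, hQ.2.1.sublist (hSsub j), hQ.2.2.infix (hSinf j)⟩
    intro h
    have := hSlen j
    rw [h] at this
    simp at this
    omega
  have hSmin : ∀ j, IsMinimal G (S j) := by
    intro j i i' hGe
    have hsl := hSlen j
    have hi : (i : ℕ) < d := by have := i.2; omega
    have hi' : (i' : ℕ) < d := by have := i'.2; omega
    have h1 : (S j).get i = Q.get ⟨(j : ℕ) * d + i, by have := hbound j; have := hexp j; omega⟩ := by
      simp only [List.get_eq_getElem]
      exact hSget j i hi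
    have h2 : (S j).get i' = Q.get ⟨(j : ℕ) * d + i', by have := hbound j; have := hexp j; omega⟩ := by
      simp only [List.get_eq_getElem]
      exact hSget j i' hi'
    rw [h1, h2] at hGe
    have := hQmin _ _ hGe
    simp only [] at this
    omega
  have key : ∀ j : Fin c, ∃ i : Fin Q.length,
      (j : ℕ) * d ≤ (i : ℕ) ∧ (i : ℕ) < ((j : ℕ) + 1) * d ∧ G (Q.get i) (x j) := by
    intro j
    rcases hdom (S j) (hSpath j) (hSmin j) (hSlen j) (x j) with hmem | ⟨w, hw, hGw⟩ | ⟨w, hw, hGw⟩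
    · exact absurd ((hSsub j).mem hmem) (hout j).1
    · exact absurd hGw ((hout j).2 w ((hSsub j).mem hw))
    · rcases List.mem_iff_getElem.1 hw with ⟨p, hp, hpe⟩
      have hpd : p < d := by rwa [hSlen j] at hp
      have hbj := hbound j
      have hej := hexp j
      refine ⟨⟨(j : ℕ) * d + p, by omega⟩, by show (j:ℕ)*d ≤ (j:ℕ)*d + p; omega,
        by show (j:ℕ)*d + p < _; omega, ?_⟩
      have : Q[(j : ℕ) * d + p]'(by have := hbound j; have := hexp j; omega) = w := by
        rw [← hSget j p hpd]; exact hpe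
      simpa [List.get_eq_getElem, this] using hGw
  choose f hf1 hf2 hf3 using key
  refine ⟨fun j => Q.get (f j), ?_, fun j => hf3 j, fun j => ⟨f j, rfl, hf1 j, hf2 j⟩⟩
  have hmono : StrictMono f := by
    intro a b hab
    have h1 : ((a : ℕ) + 1) * d ≤ (b : ℕ) * d :=
      Nat.mul_le_mul_right d (by exact_mod_cast hab)
    have h2 := hf2 a
    have h3 := hf1 b
    exact Fin.lt_def.2 (by omega)
  rw [List.sublist_iff_exists_fin_orderEmbedding_get_eq]
  refine ⟨(OrderEmbedding.ofStrictMono (fun i => f ((Fin.cast List.length_ofFn i))) ?_), ?_⟩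
  · intro a b hab
    exact hmono (Fin.lt_def.mpr (Fin.lt_def.mp hab))
  · intro ix
    rw [List.get_ofFn]
    rfl
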